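/- The Hamiltonians H = (H_i)_{i∈𝕀} defined by H_i(x,p) = max_{ξ∈Ξ}[−g_i(x,ξ)·p − L_i(x,ξ)] satisfy the coercivity condition (C) — for each i∈𝕀, min_{x∈𝕋ⁿ} H_i(x,p) → ∞ as |p| → ∞ — if and only if there exists δ > 0 such that the open ball B_δ of radius δ centered at the origin of ℝⁿ satisfies B_δ ⊆ conv{g_i(x,ξ) : ξ∈Ξ} for every (x,i) ∈ 𝕋ⁿ×𝕀, where conv denotes the convex hull. -/

import Mathlib

open MeasureTheory Filter Topology RealInnerProductSpace

noncomputable section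

/-- Euclidean space ℝⁿ, the universal cover of the flat torus 𝕋ⁿ = ℝⁿ/ℤⁿ. -/
abbrev Euc (n : ℕ) := EuclideanSpace ℝ (Fin n)

/-- A vector of ℝⁿ with integer coordinates (an element of ℤⁿ). -/
def IsIntVec {n : ℕ} (z : Euc n) : Prop := ∀ i, ∃ k : ℤ, z i = (k : ℝ)

/-- ℤⁿ-periodic functions on ℝⁿ: these represent functions on the torus 𝕋ⁿ. -/
def TorusFun {n : ℕ} {α : Type*} (f : Euc n → α) : Prop :=
  ∀ (x z : Euc n), IsIntVec z → f (x + z) = f x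

/-- Functions on 𝕋ⁿ × Ξ, i.e. ℤⁿ-periodic in the first variable. -/
def TorusFun2 {n : ℕ} {Ξ : Type*} {α : Type*} (f : Euc n × Ξ → α) : Prop :=
  ∀ (x z : Euc n) (ξ : Ξ), IsIntVec z → f (x + z, ξ) = f (x, ξ)

/-- The Hamiltonian H_{φ,i}(x,p) = sup_{ξ∈Ξ} (−g_i(x,ξ)·p − φ_i(x,ξ)). -/
def ham {n m : ℕ} {Ξ : Type*} (g : Fin m → Euc n × Ξ → Euc n)
    (φ : Fin m → Euc n × Ξ → ℝ) (i : Fin m) (x p : Euc n) : ℝ :=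
  ⨆ ξ : Ξ, (-⟪g i (x, ξ), p⟫ - φ i (x, ξ))

/-- The data g = (g_i), L = (L_i) consist of continuous functions on 𝕋ⁿ × Ξ. -/
def GoodData {n m : ℕ} {Ξ : Type*} [TopologicalSpace Ξ]
    (g : Fin m → Euc n × Ξ → Euc n) (L : Fin m → Euc n × Ξ → ℝ) : Prop :=
  (∀ i, Continuous (g i) ∧ TorusFun2 (g i)) ∧ (∀ i, Continuous (L i) ∧ TorusFun2 (L i))

/-- Coercivity (C): min_{x∈𝕋ⁿ} H_i(x,p) → ∞ as |p| → ∞. -/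
def Coercive {n m : ℕ} {Ξ : Type*} (g : Fin m → Euc n × Ξ → Euc n)
    (L : Fin m → Euc n × Ξ → ℝ) : Prop :=
  ∀ (i : Fin m) (M : ℝ), ∃ R : ℝ, ∀ p : Euc n, R ≤ ‖p‖ → ∀ x : Euc n, M ≤ ham g L i x p

/-- A monotone m×m real matrix. -/
def IsMonotoneMat {m : ℕ} (B : Matrix (Fin m) (Fin m) ℝ) : Prop :=
  ∀ (u : Fin m → ℝ) (k : Fin m), (∀ i, u i ≤ u k) → 0 ≤ u k → 0 ≤ ∑ j, B k j * u j

/-- Assumption (M): B(x) has continuous entries (as functions on 𝕋ⁿ) and is monotone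
for every x. -/
def GoodCoupling {n m : ℕ} (B : Euc n → Matrix (Fin m) (Fin m) ℝ) : Prop :=
  (∀ i j, Continuous (fun x => B x i j) ∧ TorusFun (fun x => B x i j)) ∧
    ∀ x, IsMonotoneMat (B x)

/-- Viscosity subsolution of λu + Bu + H_φ[u] = c in 𝕋ⁿ. -/
def IsSubsol {n m : ℕ} {Ξ : Type*} (B : Euc n → Matrix (Fin m) (Fin m) ℝ) (lam : ℝ)
    (g : Fin m → Euc n × Ξ → Euc n) (φ : Fin m → Euc n × Ξ → ℝ)
    (c : Fin m → ℝ) (u : Fin m → Euc n → ℝ) : Prop :=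
  (∀ i, UpperSemicontinuous (u i) ∧ TorusFun (u i)) ∧
    ∀ (i : Fin m) (ψ : Euc n → ℝ), ContDiff ℝ 1 ψ → TorusFun ψ →
      ∀ x : Euc n, IsLocalMax (fun y => u i y - ψ y) x →
        lam * u i x + (∑ j, B x i j * u j x) + ham g φ i x (gradient ψ x) ≤ c i

/-- Viscosity supersolution of λu + Bu + H_φ[u] = c in 𝕋ⁿ. -/
def IsSupersol {n m : ℕ} {Ξ : Type*} (B : Euc n → Matrix (Fin m) (Fin m) ℝ) (lam : ℝ)
    (g : Fin m → Euc n × Ξ → Euc n) (φ : Fin m → Euc n × Ξ → ℝ)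
    (c : Fin m → ℝ) (u : Fin m → Euc n → ℝ) : Prop :=
  (∀ i, LowerSemicontinuous (u i) ∧ TorusFun (u i)) ∧
    ∀ (i : Fin m) (ψ : Euc n → ℝ), ContDiff ℝ 1 ψ → TorusFun ψ →
      ∀ x : Euc n, IsLocalMin (fun y => u i y - ψ y) x →
        c i ≤ lam * u i x + (∑ j, B x i j * u j x) + ham g φ i x (gradient ψ x)

/-- Viscosity solution of λu + Bu + H_φ[u] = c in 𝕋ⁿ. -/
def IsSol {n m : ℕ} {Ξ : Type*} (B : Euc n → Matrix (Fin m) (Fin m) ℝ) (lam : ℝ)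
    (g : Fin m → Euc n × Ξ → Euc n) (φ : Fin m → Euc n × Ξ → ℝ)
    (c : Fin m → ℝ) (u : Fin m → Euc n → ℝ) : Prop :=
  (∀ i, Continuous (u i)) ∧ IsSubsol B lam g φ c u ∧ IsSupersol B lam g φ c u

/-- (φ,u) ∈ F(λ): φ ∈ C(𝕋ⁿ×Ξ)ᵐ, u ∈ C(𝕋ⁿ)ᵐ and u is a viscosity subsolution of
B^λ u + H_φ[u] = 0 in 𝕋ⁿ. -/
def memF {n m : ℕ} {Ξ : Type*} [TopologicalSpace Ξ]
    (B : Euc n → Matrix (Fin m) (Fin m) ℝ) (lam : ℝ)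
    (g : Fin m → Euc n × Ξ → Euc n)
    (φ : Fin m → Euc n × Ξ → ℝ) (u : Fin m → Euc n → ℝ) : Prop :=
  (∀ i, Continuous (φ i) ∧ TorusFun2 (φ i)) ∧ (∀ i, Continuous (u i)) ∧
    IsSubsol B lam g φ (fun _ => 0) u

/-- ρ_i(x) = Σ_j b_{ij}(x). -/
def rhoB {n m : ℕ} (B : Euc n → Matrix (Fin m) (Fin m) ℝ) (i : Fin m) (x : Euc n) : ℝ :=
  ∑ j, B x i j

/-- ν ∈ P_{B^λ}: a family of finite nonnegative Borel measures with ⟨ν, B^λ1⟩ = 1. -/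
def memPB {n m : ℕ} {Ξ : Type*} [MeasurableSpace Ξ]
    (B : Euc n → Matrix (Fin m) (Fin m) ℝ) (lam : ℝ)
    (ν : Fin m → Measure (Euc n × Ξ)) : Prop :=
  (∀ i, IsFiniteMeasure (ν i)) ∧
    (∑ i, ∫ q, (lam + rhoB B i q.1) ∂(ν i)) = 1

/-- ν ∈ G'(z,k,λ): ν ∈ P_{B^λ} and ⟨ν, φ − u_k(z) B^λ1⟩ ≥ 0 for every (φ,u) ∈ F(λ). -/
def memGP {n m : ℕ} {Ξ : Type*} [TopologicalSpace Ξ] [MeasurableSpace Ξ]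
    (B : Euc n → Matrix (Fin m) (Fin m) ℝ) (lam : ℝ)
    (g : Fin m → Euc n × Ξ → Euc n) (z : Euc n) (k : Fin m)
    (ν : Fin m → Measure (Euc n × Ξ)) : Prop :=
  memPB B lam ν ∧
    ∀ φ u, memF B lam g φ u →
      0 ≤ ∑ i, ∫ q, (φ i q - u k z * (lam + rhoB B i q.1)) ∂(ν i)

/-- μ ∈ P: a family of nonnegative Borel measures of total mass 1. -/
def memP {n m : ℕ} {Ξ : Type*} [MeasurableSpace Ξ]
    (μ : Fin m → Measure (Euc n × Ξ)) : Prop :=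
  (∀ i, IsFiniteMeasure (μ i)) ∧ (∑ i, (μ i Set.univ).toReal) = 1

/-- μ ∈ P(z,k,λ): μ ∈ P and Σ_i ⟨μ_i, (λ+ρ_i)⁻¹ φ_i⟩ ≥ u_k(z) for all (φ,u) ∈ F(λ). -/
def memPzk {n m : ℕ} {Ξ : Type*} [TopologicalSpace Ξ] [MeasurableSpace Ξ]
    (B : Euc n → Matrix (Fin m) (Fin m) ℝ) (lam : ℝ)
    (g : Fin m → Euc n × Ξ → Euc n) (z : Euc n) (k : Fin m)
    (μ : Fin m → Measure (Euc n × Ξ)) : Prop :=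
  memP μ ∧
    ∀ φ u, memF B lam g φ u →
      u k z ≤ ∑ i, ∫ q, (lam + rhoB B i q.1)⁻¹ * φ i q ∂(μ i)

/-- μ ∈ P(0): μ ∈ P and ⟨μ,φ⟩ ≥ 0 for all (φ,u) ∈ F(0). -/
def memP0 {n m : ℕ} {Ξ : Type*} [TopologicalSpace Ξ] [MeasurableSpace Ξ]
    (B : Euc n → Matrix (Fin m) (Fin m) ℝ)
    (g : Fin m → Euc n × Ξ → Euc n)
    (μ : Fin m → Measure (Euc n × Ξ)) : Prop :=
  memP μ ∧ ∀ φ u, memF B 0 g φ u → 0 ≤ ∑ i, ∫ q, φ i q ∂(μ i)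

/-- μ ∈ M₊(0): a family of finite nonnegative Borel measures with ⟨μ,φ⟩ ≥ 0 for all
(φ,u) ∈ F(0). -/
def memM0 {n m : ℕ} {Ξ : Type*} [TopologicalSpace Ξ] [MeasurableSpace Ξ]
    (B : Euc n → Matrix (Fin m) (Fin m) ℝ)
    (g : Fin m → Euc n × Ξ → Euc n)
    (μ : Fin m → Measure (Euc n × Ξ)) : Prop :=
  (∀ i, IsFiniteMeasure (μ i)) ∧ ∀ φ u, memF B 0 g φ u → 0 ≤ ∑ i, ∫ q, φ i q ∂(μ i)

/-- Assumption (E): problem (P₀) has a Lipschitz continuous viscosity solution. -/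
def AssumptionE {n m : ℕ} {Ξ : Type*} (B : Euc n → Matrix (Fin m) (Fin m) ℝ)
    (g : Fin m → Euc n × Ξ → Euc n) (L : Fin m → Euc n × Ξ → ℝ) : Prop :=
  ∃ v₀ : Fin m → Euc n → ℝ, (∀ i, ∃ K : NNReal, LipschitzWith K (v₀ i)) ∧
    IsSol B 0 g L (fun _ => 0) v₀

end


theorem isCompact_convexHull' {E : Type*} [NormedAddCommGroup E] [NormedSpace ℝ E]
    [FiniteDimensional ℝ E] {s : Set E} (hs : IsCompact s) :
    IsCompact (convexHull ℝ s) := by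
  rcases s.eq_empty_or_nonempty with rfl | ⟨x₀, hx₀⟩
  · simp [convexHull_empty]
  set d := Module.finrank ℝ E + 1 with hd
  set Φ : (Fin d → ℝ) × (Fin d → E) → E := fun p => ∑ i, p.1 i • p.2 i with hΦ
  have hΦc : Continuous Φ := by
    apply continuous_finset_sum
    intro i _
    exact ((continuous_apply i).comp continuous_fst).smul
      ((continuous_apply i).comp continuous_snd)
  set D : Set ((Fin d → ℝ) × (Fin d → E)) :=
    (stdSimplex ℝ (Fin d)) ×ˢ (Set.univ.pi fun _ => s) with hD
  have hDc : IsCompact D := (isCompact_stdSimplex (𝕜 := ℝ) (ι := Fin d)).prod (isCompact_univ_pi fun _ => hs)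
  have himg : Φ '' D = convexHull ℝ s := by
    apply Set.Subset.antisymm
    · rintro _ ⟨⟨w, z⟩, ⟨⟨hw0, hw1⟩, hz⟩, rfl⟩
      show ∑ i, w i • z i ∈ convexHull ℝ s
      rw [← Finset.centerMass_eq_of_sum_1 _ _ hw1]
      exact Finset.centerMass_mem_convexHull _ (fun i _ => hw0 i) (by rw [hw1]; norm_num)
        (fun i _ => hz i (Set.mem_univ i))
    · intro x hx
      obtain ⟨ι, hι, z, w, hzs, hai, hw0, hw1, hsum⟩ :=
        eq_pos_convex_span_of_mem_convexHull hx
      have hcard : Fintype.card ι ≤ d := by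
        refine hai.card_le_finrank_succ.trans ?_
        exact Nat.add_le_add_right (Submodule.finrank_le _) 1
      obtain ⟨e⟩ : Nonempty (ι ↪ Fin d) :=
        Function.Embedding.nonempty_of_card_le (by simpa using hcard)
      classical
      set W : Fin d → ℝ := fun j => if h : ∃ i, e i = j then w h.choose else 0 with hW
      set Z : Fin d → E := fun j => if h : ∃ i, e i = j then z h.choose else x₀ with hZ
      have hWe : ∀ i, W (e i) = w i := by
        intro i
        have h : ∃ i', e i' = e i := ⟨i, rfl⟩
        simp only [hW, dif_pos h]
        rw [e.injective h.choose_spec]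
      have hZe : ∀ i, Z (e i) = z i := by
        intro i
        have h : ∃ i', e i' = e i := ⟨i, rfl⟩
        simp only [hZ, dif_pos h]
        rw [e.injective h.choose_spec]
      have hsplit : ∀ f : Fin d → E, (∀ j, ¬(∃ i, e i = j) → f j = 0) →
          ∑ j, f j = ∑ i, f (e i) := by
        intro f hf
        rw [← Finset.sum_map Finset.univ e f]
        refine (Finset.sum_subset (Finset.subset_univ _) ?_).symm
        intro j _ hj
        refine hf j fun ⟨i, hi⟩ => hj ?_
        rw [Finset.mem_map]
        exact ⟨i, Finset.mem_univ i, hi⟩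
      refine ⟨(W, Z), ⟨⟨fun j => ?_, ?_⟩, fun j _ => ?_⟩, ?_⟩
      · by_cases h : ∃ i, e i = j
        · simp only [hW, dif_pos h]; exact (hw0 _).le
        · simp only [hW, dif_neg h]; exact le_refl 0
      · have hsplit' : ∀ f : Fin d → ℝ, (∀ j, ¬(∃ i, e i = j) → f j = 0) →
            ∑ j, f j = ∑ i, f (e i) := by
          intro f hf
          rw [← Finset.sum_map Finset.univ e f]
          refine (Finset.sum_subset (Finset.subset_univ _) ?_).symm
          intro j _ hj
          refine hf j fun ⟨i, hi⟩ => hj ?_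
          rw [Finset.mem_map]
          exact ⟨i, Finset.mem_univ i, hi⟩
        rw [hsplit' W (fun j hj => by simp only [hW, dif_neg hj])]
        simp only [hWe]
        exact hw1
      · by_cases h : ∃ i, e i = j
        · simp only [hZ, dif_pos h]; exact hzs ⟨_, rfl⟩
        · simp only [hZ, dif_neg h]; exact hx₀
      · show ∑ j, W j • Z j = x
        rw [hsplit (fun j => W j • Z j) (fun j hj => by simp [hW, dif_neg hj])]
        simp only [hWe, hZe]
        exact hsum
  rw [← himg]
  exact hDc.image hΦc


theorem torus_bound {n : ℕ} {Ξ : Type*} [MetricSpace Ξ] [CompactSpace Ξ]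
    (f : Euc n × Ξ → ℝ) (hc : Continuous f) (hp : TorusFun2 f) :
    ∃ C : ℝ, 0 ≤ C ∧ ∀ x ξ, |f (x, ξ)| ≤ C := by
  have hKc : IsCompact ((Metric.closedBall (0 : Euc n) (Real.sqrt n)) ×ˢ (Set.univ : Set Ξ)) :=
    (isCompact_closedBall _ _).prod isCompact_univ
  obtain ⟨C, hC⟩ := hKc.exists_bound_of_continuousOn hc.continuousOn
  refine ⟨max C 0, le_max_right _ _, fun x ξ => ?_⟩
  classical
  set y : Euc n := WithLp.toLp 2 (fun j => Int.fract (x j)) with hy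
  set z : Euc n := WithLp.toLp 2 (fun j => ((⌊x j⌋ : ℤ) : ℝ)) with hz
  have hxyz : x = y + z := by
    ext j
    show x j = y j + z j
    simp [hy, hz, Int.fract_add_floor]
  have hiv : IsIntVec z := fun j => ⟨⌊x j⌋, rfl⟩
  have hfx : f (x, ξ) = f (y, ξ) := by rw [hxyz]; exact hp y z ξ hiv
  have hyb : y ∈ Metric.closedBall (0 : Euc n) (Real.sqrt n) := by
    rw [Metric.mem_closedBall, dist_zero_right, EuclideanSpace.norm_eq]
    apply Real.sqrt_le_sqrt
    calc ∑ j, ‖y j‖ ^ 2 ≤ ∑ j : Fin n, 1 := by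
          apply Finset.sum_le_sum
          intro j _
          have h1 : |y j| ≤ 1 := by
            rw [hy, abs_of_nonneg (Int.fract_nonneg _)]
            exact (Int.fract_lt_one _).le
          calc ‖y j‖ ^ 2 = |y j| ^ 2 := rfl
            _ ≤ 1 ^ 2 := by gcongr
            _ = 1 := one_pow 2
      _ = (n : ℝ) := by simp
  rw [hfx]
  calc |f (y, ξ)| = ‖f (y, ξ)‖ := rfl
    _ ≤ C := hC (y, ξ) ⟨hyb, Set.mem_univ ξ⟩
    _ ≤ max C 0 := le_max_left _ _


theorem stmt0 {n m : ℕ} (hn : 0 < n) (hm : 0 < m)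
    {Ξ : Type*} [MetricSpace Ξ] [CompactSpace Ξ] [Nonempty Ξ]
    (g : Fin m → Euc n × Ξ → Euc n) (L : Fin m → Euc n × Ξ → ℝ)
    (hgL : GoodData g L) :
    Coercive g L ↔
      ∃ δ : ℝ, 0 < δ ∧ ∀ (x : Euc n) (i : Fin m),
        Metric.ball (0 : Euc n) δ ⊆ convexHull ℝ (Set.range fun ξ : Ξ => g i (x, ξ)) := by
  obtain ⟨hg, hL⟩ := hgL
  choose C0 hC0 hC0' using fun i => torus_bound (L i) (hL i).1 (hL i).2
  set C : ℝ := ∑ i, C0 i with hCdef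
  have hCi : ∀ i, C0 i ≤ C :=
    fun i => Finset.single_le_sum (fun j _ => hC0 j) (Finset.mem_univ i)
  have hC : 0 ≤ C := Finset.sum_nonneg fun j _ => hC0 j
  constructor
  · intro hco
    by_contra hcon
    push_neg at hcon
    choose R hR using fun i => hco i (C + 1)
    set t : ℝ := 1 + ∑ i, |R i| with htdef
    have ht1 : 1 ≤ t := le_add_of_nonneg_right (Finset.sum_nonneg fun _ _ => abs_nonneg _)
    have ht0 : 0 < t := lt_of_lt_of_le one_pos ht1
    have htR : ∀ i, R i ≤ t := by
      intro i
      calc R i ≤ |R i| := le_abs_self _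
        _ ≤ ∑ j, |R j| := Finset.single_le_sum (f := fun j => |R j|) (fun j _ => abs_nonneg _) (Finset.mem_univ i)
        _ ≤ t := by rw [htdef]; linarith
    obtain ⟨x, i, hsub⟩ := hcon ((2*t)⁻¹) (by positivity)
    rw [Set.not_subset] at hsub
    obtain ⟨w, hwball, hwK⟩ := hsub
    set S : Set (Euc n) := Set.range (fun ξ : Ξ => g i (x, ξ)) with hSdef
    have hgc : Continuous fun ξ : Ξ => g i (x, ξ) := (hg i).1.comp (Continuous.prodMk_right x)
    have hKcomp : IsCompact (convexHull ℝ S) := isCompact_convexHull' (isCompact_range hgc)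
    obtain ⟨f, u, hfu, hfw⟩ := geometric_hahn_banach_closed_point
      (convex_convexHull ℝ S) hKcomp.isClosed hwK
    set pf : Euc n := (InnerProductSpace.toDual ℝ (Euc n)).symm f with hpfdef
    have hpf : ∀ y, ⟪pf, y⟫ = f y := fun y => InnerProductSpace.toDual_symm_apply
    obtain ⟨ξ₀⟩ := ‹Nonempty Ξ›
    have hfne : f (g i (x, ξ₀)) < f w :=
      lt_trans (hfu _ (subset_convexHull ℝ S ⟨ξ₀, rfl⟩)) hfw
    have hpf0 : pf ≠ 0 := by
      intro h
      have h1 := hpf (g i (x, ξ₀))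
      have h2 := hpf w
      rw [h, inner_zero_left] at h1 h2
      rw [← h1, ← h2] at hfne
      exact lt_irrefl _ hfne
    have hnpf : 0 < ‖pf‖ := norm_pos_iff.mpr hpf0
    set p : Euc n := (-(t / ‖pf‖)) • pf with hpdef
    have hpn : ‖p‖ = t := by
      rw [hpdef, norm_smul, norm_neg, Real.norm_eq_abs, abs_of_pos (by positivity),
        div_mul_cancel₀]
      exact ne_of_gt hnpf
    have hham : C + 1 ≤ ham g L i x p := hR i p (by rw [hpn]; exact htR i) x
    have hwn : ‖w‖ ≤ (2*t)⁻¹ := by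
      rw [Metric.mem_ball, dist_zero_right] at hwball
      exact hwball.le
    have hub : ham g L i x p ≤ C + 2⁻¹ := by
      apply ciSup_le
      intro ξ
      have h1 : -⟪g i (x,ξ), p⟫ = (t/‖pf‖) * f (g i (x,ξ)) := by
        rw [hpdef, real_inner_smul_right, real_inner_comm, hpf]
        ring
      have h2 : f (g i (x,ξ)) < u := hfu _ (subset_convexHull ℝ S ⟨ξ,rfl⟩)
      have h3 : u ≤ ‖pf‖ * ‖w‖ := by
        have := real_inner_le_norm pf w
        rw [hpf w] at this
        linarith
      have h4 : (t/‖pf‖) * f (g i (x,ξ)) ≤ (t/‖pf‖) * (‖pf‖ * (2*t)⁻¹) := by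
        apply mul_le_mul_of_nonneg_left _ (by positivity)
        calc f (g i (x,ξ)) ≤ u := h2.le
          _ ≤ ‖pf‖ * ‖w‖ := h3
          _ ≤ ‖pf‖ * (2*t)⁻¹ := mul_le_mul_of_nonneg_left hwn (norm_nonneg _)
      have h5 : (t/‖pf‖) * (‖pf‖ * (2*t)⁻¹) = 2⁻¹ := by
        field_simp
      have h6 : -L i (x, ξ) ≤ C := by
        have := hC0' i x ξ
        have := hCi i
        have := abs_le.mp (hC0' i x ξ)
        linarith
      rw [h5] at h4
      rw [h1]
      linarith
    linarith
  · rintro ⟨δ, hδ, hball⟩ i M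
    refine ⟨max (2*(M + C)/δ) 1, fun p hp x => ?_⟩
    have hp1 : 1 ≤ ‖p‖ := le_trans (le_max_right _ _) hp
    have hp0 : 0 < ‖p‖ := lt_of_lt_of_le one_pos hp1
    have hpM : 2*(M + C)/δ ≤ ‖p‖ := le_trans (le_max_left _ _) hp
    have hgc : Continuous fun ξ : Ξ => g i (x, ξ) := (hg i).1.comp (Continuous.prodMk_right x)
    have hLc : Continuous fun ξ : Ξ => L i (x, ξ) := (hL i).1.comp (Continuous.prodMk_right x)
    have hic : Continuous fun ξ : Ξ => (-⟪g i (x, ξ), p⟫ : ℝ) :=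
      (hgc.inner continuous_const).neg
    obtain ⟨ξ₀, -, hmax⟩ :=
      isCompact_univ.exists_isMaxOn Set.univ_nonempty hic.continuousOn
    set S0 : ℝ := -⟪g i (x, ξ₀), p⟫ with hS0
    have hhull : convexHull ℝ (Set.range fun ξ : Ξ => g i (x,ξ)) ⊆
        {v : Euc n | -S0 ≤ ⟪v, p⟫} := by
      apply convexHull_min
      · rintro _ ⟨ξ, rfl⟩
        have h : -⟪g i (x,ξ), p⟫ ≤ -⟪g i (x,ξ₀), p⟫ := hmax (Set.mem_univ ξ)
        simp only [Set.mem_setOf_eq, hS0]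
        linarith
      · exact convex_halfSpace_ge
          ⟨fun a b => inner_add_left a b p, fun c v => real_inner_smul_left v p c⟩ (-S0)
    set w : Euc n := (-(δ/2) * ‖p‖⁻¹) • p with hwdef
    have hwmem : w ∈ Metric.ball (0 : Euc n) δ := by
      rw [Metric.mem_ball, dist_zero_right, hwdef, norm_smul, Real.norm_eq_abs]
      rw [abs_mul, abs_neg, abs_of_pos (by linarith : (0:ℝ) < δ/2), abs_inv, abs_of_pos hp0]
      rw [mul_assoc, inv_mul_cancel₀ (ne_of_gt hp0), mul_one]
      linarith
    have hw : -S0 ≤ ⟪w, p⟫ := hhull (hball x i hwmem)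
    have hwp : ⟪w, p⟫ = -(δ/2) * ‖p‖ := by
      rw [hwdef, real_inner_smul_left, real_inner_self_eq_norm_sq]
      field_simp
    have hS0ge : (δ/2) * ‖p‖ ≤ S0 := by rw [hwp] at hw; linarith
    have hbdd : BddAbove (Set.range fun ξ : Ξ => -⟪g i (x,ξ),p⟫ - L i (x,ξ)) :=
      (isCompact_range (hic.sub hLc)).bddAbove
    have hle : -⟪g i (x,ξ₀),p⟫ - L i (x,ξ₀) ≤ ham g L i x p := le_ciSup hbdd ξ₀
    have hLb : -L i (x, ξ₀) ≥ -C := by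
      have := abs_le.mp (hC0' i x ξ₀)
      have := hCi i
      linarith
    have hMC : M + C ≤ (δ/2) * ‖p‖ := by
      have h := mul_le_mul_of_nonneg_left hpM (by linarith : (0:ℝ) ≤ δ/2)
      calc M + C = (δ/2) * (2*(M + C)/δ) := by field_simp
        _ ≤ (δ/2) * ‖p‖ := h
    calc M = (M + C) + (-C) := by ring
      _ ≤ S0 + (- L i (x, ξ₀)) := add_le_add (le_trans hMC hS0ge) hLb
      _ = -⟪g i (x,ξ₀),p⟫ - L i (x,ξ₀) := by rw [hS0]; ring
      _ ≤ ham g L i x p := hle
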